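/- arXiv:1207.0935 — 7 statements merged into one kernel-verified Lean document; each statement's English description precedes it below -/
import Mathlib

section
/- If a deterministic mechanism F for locating facilities on the real line is strategyproof, then for every agent i, every profile x of the other agents' locations, and every true location y of agent i, the cost agent i incurs under F(x_{-i}, y) equals the distance from y to the nearest point of agent i's image set I_i(x_{-i}); in particular, if y lies in I_i(x_{-i}), then F(x_{-i}, y) places a facility at y. -/
noncomputable section

/-- Cost of an agent with true location `a` under a `K`-tuple of facilities:
the distance to the nearest facility. -/
def fcostK {K : ℕ} (a : ℝ) (y : Fin K → ℝ) : ℝ := ⨅ ℓ, |a - y ℓ|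

/-- The image (option) set of agent `i` with respect to the other agents'
locations in `x`: all facility locations agent `i` can obtain by varying
her report. -/
def imageSet {n K : ℕ} (F : (Fin n → ℝ) → (Fin K → ℝ)) (x : Fin n → ℝ)
    (i : Fin n) : Set ℝ :=
  {a | ∃ y ℓ, F (Function.update x i y) ℓ = a}

/-- If a deterministic `K`-facility mechanism `F` on the line is strategyproof,
then for every agent `i`, every profile `x`, and every true location `y`,
the cost agent `i` incurs under `F(x_{-i}, y)` equals the infimum distance
from `y` to her image set; in particular if `y` lies in the image set, then
`F(x_{-i}, y)` places a facility at `y`. -/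
theorem strategyproof_cost_eq_dist_imageSet (n K : ℕ) (hK : 0 < K)
    (F : (Fin n → ℝ) → (Fin K → ℝ))
    (hsp : ∀ (x : Fin n → ℝ) (i : Fin n) (y : ℝ),
      fcostK (x i) (F x) ≤ fcostK (x i) (F (Function.update x i y)))
    (x : Fin n → ℝ) (i : Fin n) (y : ℝ) :
    fcostK y (F (Function.update x i y)) =
      sInf ((fun a => |y - a|) '' imageSet F x i) ∧
    (y ∈ imageSet F x i → ∃ ℓ, F (Function.update x i y) ℓ = y) := by
  haveI : Nonempty (Fin K) := ⟨⟨0, hK⟩⟩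
  set x' := Function.update x i y with hx'
  have hx'i : x' i = y := Function.update_self i y x
  -- minimizer of the cost at profile x'
  obtain ⟨ℓ₀, hℓ₀⟩ := Finite.exists_min (fun ℓ => |y - F x' ℓ|)
  have hbdd : BddBelow (Set.range fun ℓ => |y - F x' ℓ|) :=
    ⟨0, by rintro r ⟨ℓ, rfl⟩; exact abs_nonneg _⟩
  have hcost : fcostK y (F x') = |y - F x' ℓ₀| := by
    refine le_antisymm (ciInf_le hbdd ℓ₀) (le_ciInf hℓ₀)
  -- lower bound: SP gives fcostK ≤ |y - a| for all a in image set
  have hlb : ∀ a ∈ imageSet F x i, fcostK y (F x') ≤ |y - a| := by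
    rintro a ⟨z, ℓ, rfl⟩
    have h1 := hsp x' i z
    rw [hx'i] at h1
    rw [hx', Function.update_idem] at h1
    refine h1.trans ?_
    exact ciInf_le ⟨0, by rintro r ⟨ℓ', rfl⟩; exact abs_nonneg _⟩ ℓ
  have hmem : F x' ℓ₀ ∈ imageSet F x i := ⟨y, ℓ₀, rfl⟩
  have hne : ((fun a => |y - a|) '' imageSet F x i).Nonempty :=
    ⟨_, Set.mem_image_of_mem _ hmem⟩
  have hbdd2 : BddBelow ((fun a => |y - a|) '' imageSet F x i) :=
    ⟨0, by rintro r ⟨a, _, rfl⟩; exact abs_nonneg _⟩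
  have heq : fcostK y (F x') = sInf ((fun a => |y - a|) '' imageSet F x i) := by
    refine le_antisymm ?_ ?_
    · refine le_csInf hne ?_
      rintro r ⟨a, ha, rfl⟩
      exact hlb a ha
    · exact hcost ▸ csInf_le hbdd2 (Set.mem_image_of_mem _ hmem)
  refine ⟨heq, fun hy => ?_⟩
  have h0 : fcostK y (F x') ≤ 0 := by
    have := hlb y hy
    simpa using this
  have h0' : |y - F x' ℓ₀| = 0 :=
    le_antisymm (hcost ▸ h0) (abs_nonneg _)
  exact ⟨ℓ₀, by linarith [abs_eq_zero.mp h0']⟩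
end
end

section
/- Let F be a strategyproof 2-facility mechanism on the line with approximation ratio at most ρ for the social cost (sum of agents' distances to their nearest facility). Then for every instance x with three agents at locations x_i < x_j < x_k, the leftmost facility F_1(x) satisfies F_1(x) ≤ x_j and the rightmost facility F_2(x) satisfies F_2(x) ≥ x_j. -/
noncomputable section

/-- Cost of an agent at location `a` under a pair of facilities. -/
def fcost (a : ℝ) (y : ℝ × ℝ) : ℝ := min |a - y.1| |a - y.2|

/-- Social cost: sum of the agents' distances to their nearest facility. -/
def scost {n : ℕ} (x : Fin n → ℝ) (y : ℝ × ℝ) : ℝ := ∑ i, fcost (x i) y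

/-- Optimal social cost over all placements of two facilities. -/
def optCost {n : ℕ} (x : Fin n → ℝ) : ℝ := ⨅ y : ℝ × ℝ, scost x y

/-- The mechanism outputs its facilities in increasing order. -/
def Ordered {n : ℕ} (F : (Fin n → ℝ) → ℝ × ℝ) : Prop := ∀ x, (F x).1 ≤ (F x).2

/-- No agent can strictly decrease her cost by misreporting her location. -/
def Strategyproof {n : ℕ} (F : (Fin n → ℝ) → ℝ × ℝ) : Prop :=
  ∀ (x : Fin n → ℝ) (i : Fin n) (y : ℝ),
    fcost (x i) (F x) ≤ fcost (x i) (F (Function.update x i y))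

/-- `F` has approximation ratio (at most) `ρ` for the social cost. -/
def ApproxRatio {n : ℕ} (F : (Fin n → ℝ) → ℝ × ℝ) (ρ : ℝ) : Prop :=
  ∀ x, scost x (F x) ≤ ρ * optCost x

/-- An `(i|j,k)`-well-separated 3-agent instance. -/
def WellSep (ρ : ℝ) (x : Fin 3 → ℝ) (i j k : Fin 3) : Prop :=
  x i < x j ∧ x j < x k ∧ ρ * (x k - x j) < x j - x i

lemma fcost_nonneg (a : ℝ) (y : ℝ × ℝ) : 0 ≤ fcost a y :=
  le_min (abs_nonneg _) (abs_nonneg _)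

lemma scost_nonneg {n : ℕ} (x : Fin n → ℝ) (y : ℝ × ℝ) : 0 ≤ scost x y :=
  Finset.sum_nonneg fun _ _ => fcost_nonneg _ _

lemma optCost_le {n : ℕ} (x : Fin n → ℝ) (y : ℝ × ℝ) : optCost x ≤ scost x y :=
  ciInf_le ⟨0, fun _ ⟨z, hz⟩ => hz ▸ scost_nonneg x z⟩ y

lemma fin3_cases : ∀ i j k : Fin 3, i ≠ j → i ≠ k → j ≠ k →
    ∀ m : Fin 3, m = i ∨ m = j ∨ m = k := by decide

lemma facility_at {a : ℝ} {y : ℝ × ℝ} (h : fcost a y = 0) : y.1 = a ∨ y.2 = a := by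
  unfold fcost at h
  rcases le_total |a - y.1| |a - y.2| with hle | hle
  · left
    rw [min_eq_left hle] at h
    have := abs_eq_zero.mp h
    linarith
  · right
    rw [min_eq_right hle] at h
    have := abs_eq_zero.mp h
    linarith

/-- If an agent `m` is moved to the location of agent `j` (which is distinct from
`m` but shares locations suitably), and the resulting instance has only the two
locations `x j` and the third agent's, the optimum is 0, so by approximation the
mechanism must place a facility exactly at `x j`. -/
lemma facility_at_mid (F : (Fin 3 → ℝ) → ℝ × ℝ) (ρ : ℝ)
    (happ : ApproxRatio F ρ)
    (x : Fin 3 → ℝ) (i j k : Fin 3)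
    (hij : i ≠ j) (hik : i ≠ k) (hjk : j ≠ k) :
    (F (Function.update x i (x j))).1 = x j ∨ (F (Function.update x i (x j))).2 = x j := by
  set x2 : Fin 3 → ℝ := Function.update x i (x j) with hx2
  have hx2i : x2 i = x j := Function.update_self i (x j) x
  have hx2j : x2 j = x j := Function.update_of_ne (Ne.symm hij) _ _
  have hx2k : x2 k = x k := Function.update_of_ne (Ne.symm hik) _ _
  have hs0 : scost x2 (x j, x k) = 0 := by
    apply Finset.sum_eq_zero
    intro m _
    have hval : x2 m = x j ∨ x2 m = x k := by
      rcases fin3_cases i j k hij hik hjk m with h | h | h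
      · left; rw [h, hx2i]
      · left; rw [h, hx2j]
      · right; rw [h, hx2k]
    rcases hval with h | h
    · show min |x2 m - x j| |x2 m - x k| = 0
      rw [h, sub_self, abs_zero]
      exact min_eq_left (abs_nonneg _)
    · show min |x2 m - x j| |x2 m - x k| = 0
      rw [h, sub_self, abs_zero]
      exact min_eq_right (abs_nonneg _)
  have hopt : optCost x2 = 0 :=
    le_antisymm (hs0 ▸ optCost_le x2 (x j, x k)) (le_ciInf fun y => scost_nonneg x2 y)
  have hF2 : scost x2 (F x2) ≤ 0 := by
    have h := happ x2
    rw [hopt, mul_zero] at h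
    exact h
  have hj0 : fcost (x2 j) (F x2) = 0 := by
    have h1 : fcost (x2 j) (F x2) ≤ scost x2 (F x2) :=
      Finset.single_le_sum (fun m _ => fcost_nonneg (x2 m) (F x2)) (Finset.mem_univ j)
    have h2 := fcost_nonneg (x2 j) (F x2)
    linarith
  rw [hx2j] at hj0
  exact facility_at hj0

/-- Proposition "middle": for any 3-agent instance with `x_i < x_j < x_k`,
the leftmost facility is at most `x_j` and the rightmost facility is at
least `x_j`. -/
theorem middle (F : (Fin 3 → ℝ) → ℝ × ℝ) (ρ : ℝ) (hρ : 1 ≤ ρ)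
    (hord : Ordered F) (hsp : Strategyproof F) (happ : ApproxRatio F ρ)
    (x : Fin 3 → ℝ) (i j k : Fin 3)
    (hij : i ≠ j) (hik : i ≠ k) (hjk : j ≠ k)
    (h1 : x i < x j) (h2 : x j < x k) :
    (F x).1 ≤ x j ∧ x j ≤ (F x).2 := by
  constructor
  · -- move agent i to x j
    have hfac := facility_at_mid F ρ happ x i j k hij hik hjk
    have hspi := hsp x i (x j)
    set x2 : Fin 3 → ℝ := Function.update x i (x j) with hx2
    have hub : fcost (x i) (F x2) ≤ x j - x i := by
      rcases hfac with h | h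
      · calc fcost (x i) (F x2) ≤ |x i - (F x2).1| := min_le_left _ _
          _ = x j - x i := by rw [h, abs_sub_comm, abs_of_nonneg (by linarith)]
      · calc fcost (x i) (F x2) ≤ |x i - (F x2).2| := min_le_right _ _
          _ = x j - x i := by rw [h, abs_sub_comm, abs_of_nonneg (by linarith)]
    have hm : min |x i - (F x).1| |x i - (F x).2| ≤ x j - x i := le_trans hspi hub
    rcases le_total |x i - (F x).1| |x i - (F x).2| with h | h
    · rw [min_eq_left h] at hm
      have := abs_le.mp hm
      linarith [this.1]
    · rw [min_eq_right h] at hm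
      have := abs_le.mp hm
      have h2' := hord x
      linarith [this.1]
  · -- move agent k to x j
    have hfac := facility_at_mid F ρ happ x k j i (Ne.symm hjk) (Ne.symm hik) (Ne.symm hij)
    have hspk := hsp x k (x j)
    set x3 : Fin 3 → ℝ := Function.update x k (x j) with hx3
    have hub : fcost (x k) (F x3) ≤ x k - x j := by
      rcases hfac with h | h
      · calc fcost (x k) (F x3) ≤ |x k - (F x3).1| := min_le_left _ _
          _ = x k - x j := by rw [h, abs_of_nonneg (by linarith)]
      · calc fcost (x k) (F x3) ≤ |x k - (F x3).2| := min_le_right _ _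
          _ = x k - x j := by rw [h, abs_of_nonneg (by linarith)]
    have hm : min |x k - (F x).1| |x k - (F x).2| ≤ x k - x j := le_trans hspk hub
    rcases le_total |x k - (F x).1| |x k - (F x).2| with h | h
    · rw [min_eq_left h] at hm
      have := abs_le.mp hm
      have h2' := hord x
      linarith [this.2]
    · rw [min_eq_right h] at hm
      have := abs_le.mp hm
      linarith [this.2]
end
end

section
/- Let F be a strategyproof 2-facility mechanism on the line with approximation ratio at most ρ. For every (i|j,k)-well-separated 3-agent instance x (i.e., x_i < x_j < x_k and ρ(x_k − x_j) < x_j − x_i), the rightmost facility satisfies F_2(x) ∈ [x_j, x_k]. -/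
noncomputable section

lemma fcost_le_left (a : ℝ) (y : ℝ × ℝ) : fcost a y ≤ |a - y.1| := min_le_left _ _

lemma fcost_le_right (a : ℝ) (y : ℝ × ℝ) : fcost a y ≤ |a - y.2| := min_le_right _ _

lemma sum3 (f : Fin 3 → ℝ) (i j k : Fin 3) (hij : i ≠ j) (hik : i ≠ k) (hjk : j ≠ k) :
    ∑ t, f t = f i + f j + f k := by
  fin_cases i <;> fin_cases j <;> fin_cases k <;>
    simp_all [Fin.sum_univ_three] <;> ring

/-- For every `(i|j,k)`-well-separated 3-agent instance, the rightmost
facility lies in `[x_j, x_k]`. -/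
theorem rightmost_facility_mem_Icc (F : (Fin 3 → ℝ) → ℝ × ℝ) (ρ : ℝ) (hρ : 1 ≤ ρ)
    (hord : Ordered F) (hsp : Strategyproof F) (happ : ApproxRatio F ρ)
    (x : Fin 3 → ℝ) (i j k : Fin 3)
    (hij : i ≠ j) (hik : i ≠ k) (hjk : j ≠ k)
    (hws : WellSep ρ x i j k) :
    (F x).2 ∈ Set.Icc (x j) (x k) := by
  obtain ⟨hab, hbc, hsep⟩ := hws
  set a := x i with ha
  set b := x j with hb
  set c := x k with hc
  have hρ0 : (0:ℝ) < ρ := lt_of_lt_of_le zero_lt_one hρ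
  have hsum : ∀ (z : Fin 3 → ℝ) (y : ℝ × ℝ),
      scost z y = fcost (z i) y + fcost (z j) y + fcost (z k) y :=
    fun z y => sum3 _ i j k hij hik hjk
  -- total cost bound
  have hopt : optCost x ≤ c - b := by
    refine (optCost_le x (a, b)).trans ?_
    rw [hsum]
    have g1 : fcost (x i) (a, b) ≤ 0 := by
      simpa [ha] using fcost_le_left (x i) (a, b)
    have g2 : fcost (x j) (a, b) ≤ 0 := by
      simpa [hb] using fcost_le_right (x j) (a, b)
    have g3 : fcost (x k) (a, b) ≤ |c - b| :=
      fcost_le_right (x k) (a, b)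
    rw [abs_of_pos (by linarith)] at g3
    linarith
  have hC : scost x (F x) ≤ ρ * (c - b) :=
    (happ x).trans (mul_le_mul_of_nonneg_left hopt hρ0.le)
  have hC' : scost x (F x) < b - a := lt_of_le_of_lt hC hsep
  have hpq := hord x
  -- strategyproofness bound on agent j's cost
  have hdj : fcost b (F x) ≤ c - b := by
    have hspj := hsp x j c
    set x'' := Function.update x j c with hx''
    have e1 : x'' i = a := Function.update_of_ne hij c x
    have e2 : x'' j = c := Function.update_self j c x
    have e3 : x'' k = c := Function.update_of_ne hjk.symm c x
    have hopt'' : optCost x'' ≤ 0 := by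
      refine (optCost_le x'' (a, c)).trans ?_
      rw [hsum]
      have g1 : fcost (x'' i) (a, c) ≤ 0 := by
        rw [e1]; simpa using fcost_le_left a (a, c)
      have g2 : fcost (x'' j) (a, c) ≤ 0 := by
        rw [e2]; simpa using fcost_le_right c (a, c)
      have g3 : fcost (x'' k) (a, c) ≤ 0 := by
        rw [e3]; simpa using fcost_le_right c (a, c)
      linarith
    have hcost'' : scost x'' (F x'') ≤ 0 := by
      have h1 := happ x''
      nlinarith
    have hk0 : fcost c (F x'') ≤ 0 := by
      have hs := hsum x'' (F x'')
      have n1 := fcost_nonneg (x'' i) (F x'')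
      have n2 := fcost_nonneg (x'' j) (F x'')
      rw [e3] at hs
      linarith
    have hfac : (F x'').1 = c ∨ (F x'').2 = c := by
      unfold fcost at hk0
      rcases le_total |c - (F x'').1| |c - (F x'').2| with h' | h'
      · left
        have h0 : |c - (F x'').1| = 0 := le_antisymm (by rw [min_eq_left h'] at hk0; exact hk0) (abs_nonneg _)
        have := abs_eq_zero.mp h0
        linarith [sub_eq_zero.mp this]
      · right
        have h0 : |c - (F x'').2| = 0 := le_antisymm (by rw [min_eq_right h'] at hk0; exact hk0) (abs_nonneg _)
        have := abs_eq_zero.mp h0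
        linarith [sub_eq_zero.mp this]
    have hbj : fcost b (F x'') ≤ c - b := by
      rcases hfac with h' | h'
      · refine (fcost_le_left b (F x'')).trans ?_
        rw [h', abs_of_nonpos (by linarith)]; linarith
      · refine (fcost_le_right b (F x'')).trans ?_
        rw [h', abs_of_nonpos (by linarith)]; linarith
    exact hspj.trans hbj
  constructor
  · -- b ≤ (F x).2
    by_contra hcon
    push_neg at hcon
    set p := (F x).1 with hp
    set q := (F x).2 with hq
    have hd : 0 < b - q := by linarith
    set d := b - q with hdd
    have hfk : fcost c (F x) = c - q := by
      unfold fcost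
      rw [abs_of_pos (show (0:ℝ) < c - p by linarith), abs_of_pos (show (0:ℝ) < c - q by linarith)]
      exact min_eq_right (by linarith)
    have hfj : fcost b (F x) = d := by
      unfold fcost
      rw [abs_of_pos (show (0:ℝ) < b - p by linarith), abs_of_pos (show (0:ℝ) < b - q by linarith)]
      exact min_eq_right (by linarith)
    have hdlt : d < b - a := by
      have hs := hsum x (F x)
      have n1 := fcost_nonneg (x i) (F x)
      have n3 := fcost_nonneg (x k) (F x)
      have : fcost (x j) (F x) = d := hfj
      linarith
    set ε := d / (2 * ρ) with hε_def
    have hε : 0 < ε := div_pos hd (by linarith)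
    have hερ : ρ * ε = d / 2 := by
      rw [hε_def]; field_simp
    set x' := Function.update x k (b + ε) with hx'
    have e1 : x' i = a := Function.update_of_ne hik _ x
    have e2 : x' j = b := Function.update_of_ne hjk _ x
    have e3 : x' k = b + ε := Function.update_self k _ x
    have hopt' : optCost x' ≤ ε := by
      refine (optCost_le x' (a, b)).trans ?_
      rw [hsum]
      have g1 : fcost (x' i) (a, b) ≤ 0 := by
        rw [e1]; simpa using fcost_le_left a (a, b)
      have g2 : fcost (x' j) (a, b) ≤ 0 := by
        rw [e2]; simpa using fcost_le_right b (a, b)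
      have g3 : fcost (x' k) (a, b) ≤ ε := by
        rw [e3]
        refine (fcost_le_right _ (a, b)).trans ?_
        simp [abs_of_pos hε]
      linarith
    have hcost' : scost x' (F x') ≤ d / 2 := by
      have h1 := happ x'
      have h2 : ρ * optCost x' ≤ ρ * ε := mul_le_mul_of_nonneg_left hopt' hρ0.le
      linarith
    set p' := (F x').1 with hp'
    set q' := (F x').2 with hq'
    have hpq' : p' ≤ q' := hord x'
    have hi' : fcost a (F x') ≤ d / 2 := by
      have hs := hsum x' (F x')
      have n2 := fcost_nonneg (x' j) (F x')
      have n3 := fcost_nonneg (x' k) (F x')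
      rw [e1] at hs
      linarith
    have hj' : fcost b (F x') ≤ d / 2 := by
      have hs := hsum x' (F x')
      have n1 := fcost_nonneg (x' i) (F x')
      have n3 := fcost_nonneg (x' k) (F x')
      rw [e2] at hs
      linarith
    have hq'b : |b - q'| ≤ d / 2 := by
      by_contra hcon2
      push_neg at hcon2
      have hbp' : |b - p'| ≤ d / 2 := by
        unfold fcost at hj'
        rcases le_total |b - p'| |b - q'| with h' | h'
        · rwa [min_eq_left h'] at hj'
        · rw [min_eq_right h'] at hj'; linarith
      have hp'lb : b - d / 2 ≤ p' := by
        have := (abs_le.mp hbp').2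
        linarith
      have hq'lb : b - d / 2 ≤ q' := le_trans hp'lb hpq'
      have h1 : d / 2 < |a - p'| := by
        have h2 : p' - a ≤ |a - p'| := by
          rw [abs_sub_comm]; exact le_abs_self _
        linarith
      have h2 : d / 2 < |a - q'| := by
        have h3 : q' - a ≤ |a - q'| := by
          rw [abs_sub_comm]; exact le_abs_self _
        linarith
      have := lt_min h1 h2
      unfold fcost at hi'
      linarith
    have hk' : fcost c (F x') ≤ (c - b) + d / 2 := by
      refine (fcost_le_right c (F x')).trans ?_
      have htri : |c - q'| ≤ |c - b| + |b - q'| := abs_sub_le c b q'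
      rw [abs_of_pos (show (0:ℝ) < c - b by linarith)] at htri
      linarith
    have hspk := hsp x k (b + ε)
    rw [← hc, ← hx'] at hspk
    rw [hfk] at hspk
    have : c - q ≤ (c - b) + d / 2 := hspk.trans hk'
    linarith
  · -- (F x).2 ≤ c
    by_contra hcon
    push_neg at hcon
    set p := (F x).1 with hp
    set q := (F x).2 with hq
    have hbq : c - b < |b - q| := by
      have : q - b ≤ |b - q| := by rw [abs_sub_comm]; exact le_abs_self _
      linarith
    have hbp : |b - p| ≤ c - b := by
      unfold fcost at hdj
      rcases le_total |b - p| |b - q| with h' | h'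
      · rwa [min_eq_left h'] at hdj
      · rw [min_eq_right h'] at hdj; linarith
    have hfjeq : fcost b (F x) = |b - p| := by
      unfold fcost
      exact min_eq_left (by linarith)
    have hlow : b - a ≤ fcost a (F x) + fcost b (F x) := by
      rw [hfjeq]
      unfold fcost
      rcases le_total |a - p| |a - q| with h' | h'
      · rw [min_eq_left h']
        have htri : |b - a| ≤ |b - p| + |p - a| := abs_sub_le b p a
        rw [abs_of_pos (show (0:ℝ) < b - a by linarith), abs_sub_comm p a] at htri
        linarith
      · rw [min_eq_right h']
        have h3 : q - a ≤ |a - q| := by rw [abs_sub_comm]; exact le_abs_self _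
        have h4 : (0:ℝ) ≤ |b - p| := abs_nonneg _
        linarith
    have hs := hsum x (F x)
    have n3 := fcost_nonneg (x k) (F x)
    rw [← ha, ← hb] at hs
    linarith
end
end

section
/- Let F be a strategyproof 2-facility mechanism on the line with approximation ratio at most ρ, and let x be an (i|j,k)-well-separated 3-agent instance with F_2(x) = x_j. Then for every (i|j,k)-well-separated instance x' obtained from x by replacing only x_k with x'_k (keeping x_i and x_j fixed), F_2(x') = x_j. -/
noncomputable section

lemma optCost_nonneg {n : ℕ} (x : Fin n → ℝ) : 0 ≤ optCost x :=
  le_ciInf fun _ => scost_nonneg _ _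

lemma fin3_eq {i j k : Fin 3} (hij : i ≠ j) (hik : i ≠ k) (hjk : j ≠ k) (m : Fin 3) :
    m = i ∨ m = j ∨ m = k := by
  have h1 := i.isLt; have h2 := j.isLt; have h3 := k.isLt; have h4 := m.isLt
  simp only [ne_eq, Fin.ext_iff] at *
  omega

lemma scost_eq3 {i j k : Fin 3} (hij : i ≠ j) (hik : i ≠ k) (hjk : j ≠ k)
    (x : Fin 3 → ℝ) (y : ℝ × ℝ) :
    scost x y = fcost (x i) y + fcost (x j) y + fcost (x k) y := by
  have huniv : (Finset.univ : Finset (Fin 3)) = {i, j, k} := by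
    ext m; simpa using fin3_eq hij hik hjk m
  unfold scost
  rw [huniv, Finset.sum_insert (by simp [hij, hik]),
    Finset.sum_insert (by simp [hjk]), Finset.sum_singleton]
  ring

lemma lemZ (F : (Fin 3 → ℝ) → ℝ × ℝ) (ρ : ℝ) (hord : Ordered F) (happ : ApproxRatio F ρ)
    {i j k : Fin 3} (hij : i ≠ j) (hik : i ≠ k) (hjk : j ≠ k)
    (z : Fin 3 → ℝ) (u v : ℝ) (huv : u < v)
    (hzi : z i = u) (hzj : z j = v) (hzk : z k = v) : F z = (u, v) := by
  have hzero : scost z (u, v) = 0 := by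
    rw [scost_eq3 hij hik hjk, hzi, hzj, hzk]
    have h1 : fcost u (u, v) = 0 := by
      show min |u - u| |u - v| = 0
      rw [sub_self, abs_zero]; exact min_eq_left (abs_nonneg _)
    have h2 : fcost v (u, v) = 0 := by
      show min |v - u| |v - v| = 0
      rw [sub_self, abs_zero]; exact min_eq_right (abs_nonneg _)
    rw [h1, h2]; ring
  have opt0 : optCost z = 0 :=
    le_antisymm (hzero ▸ optCost_le z (u, v)) (optCost_nonneg z)
  have htot : scost z (F z) ≤ 0 := by
    have := happ z; rwa [opt0, mul_zero] at this
  rw [scost_eq3 hij hik hjk, hzi, hzj, hzk] at htot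
  have hnu := fcost_nonneg u (F z)
  have hnv := fcost_nonneg v (F z)
  have hu : fcost u (F z) = 0 := le_antisymm (by linarith) hnu
  have hv : fcost v (F z) = 0 := le_antisymm (by linarith) hnv
  have hu' : u = (F z).1 ∨ u = (F z).2 := by
    change min |u - (F z).1| |u - (F z).2| = 0 at hu
    rcases le_total |u - (F z).1| |u - (F z).2| with h | h
    · left; rw [min_eq_left h] at hu
      have := abs_eq_zero.mp hu; linarith
    · right; rw [min_eq_right h] at hu
      have := abs_eq_zero.mp hu; linarith
  have hv' : v = (F z).1 ∨ v = (F z).2 := by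
    change min |v - (F z).1| |v - (F z).2| = 0 at hv
    rcases le_total |v - (F z).1| |v - (F z).2| with h | h
    · left; rw [min_eq_left h] at hv
      have := abs_eq_zero.mp hv; linarith
    · right; rw [min_eq_right h] at hv
      have := abs_eq_zero.mp hv; linarith
  have hordz := hord z
  rcases hu' with h1 | h1 <;> rcases hv' with h2 | h2
  · linarith [h1.trans h2.symm]
  · exact Prod.ext h1.symm h2.symm
  · linarith
  · linarith

lemma step_lemma (F : (Fin 3 → ℝ) → ℝ × ℝ) (ρ : ℝ) (hρ : 1 ≤ ρ)
    (hord : Ordered F) (hsp : Strategyproof F) (happ : ApproxRatio F ρ)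
    (x : Fin 3 → ℝ) (i j k : Fin 3)
    (hij : i ≠ j) (hik : i ≠ k) (hjk : j ≠ k)
    (y y' : ℝ)
    (hws : WellSep ρ (Function.update x k y) i j k)
    (hws' : WellSep ρ (Function.update x k y') i j k)
    (hF : (F (Function.update x k y)).2 = x j)
    (hlt : y' - x j < 2 * (y - x j)) :
    (F (Function.update x k y')).2 = x j := by
  set X := Function.update x k y with hX
  set X' := Function.update x k y' with hX'
  have hXi : X i = x i := Function.update_of_ne hik y x
  have hXj : X j = x j := Function.update_of_ne hjk y x
  have hXk : X k = y := Function.update_self k y x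
  have hX'i : X' i = x i := Function.update_of_ne hik y' x
  have hX'j : X' j = x j := Function.update_of_ne hjk y' x
  have hX'k : X' k = y' := Function.update_self k y' x
  obtain ⟨h1, h2, h3⟩ := hws
  rw [hXi, hXj] at h1; rw [hXj, hXk] at h2; rw [hXi, hXj, hXk] at h3
  obtain ⟨h1', h2', h3'⟩ := hws'
  rw [hX'i, hX'j] at h1'; rw [hX'j, hX'k] at h2'; rw [hX'i, hX'j, hX'k] at h3'
  -- h1 : x i < x j, h2 : x j < y, h3 : ρ*(y - x j) < x j - x i; primes for y'
  have hρ0 : (0:ℝ) < ρ := by linarith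
  have hδ'D : y' - x j < x j - x i := by nlinarith
  set a := (F X').1 with ha
  set b := (F X').2 with hb
  have hab : a ≤ b := hord X'
  -- hole constraint from instance X
  have hhole : y - x j ≤ min |y - a| |y - b| := by
    have hsp1 := hsp X k y'
    rw [hXk, Function.update_idem] at hsp1
    refine le_trans (le_min ?_ ?_) hsp1
    · have hF1 : (F X).1 ≤ x j := hF ▸ hord X
      exact le_trans (by linarith) (le_abs_self _)
    · rw [hF]
      exact le_trans (by linarith) (le_abs_self _)
  -- cost of agent k at y' is at most y' - x j
  have hk2 : min |y' - a| |y' - b| ≤ y' - x j := by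
    have hw2 : F (Function.update x k (x j)) = (x i, x j) := by
      refine lemZ F ρ hord happ hij hik hjk _ _ _ h1 ?_ ?_ ?_
      · exact Function.update_of_ne hik _ x
      · exact Function.update_of_ne hjk _ x
      · exact Function.update_self _ _ x
    have hsp2 := hsp X' k (x j)
    rw [hX'k, Function.update_idem, hw2] at hsp2
    refine le_trans hsp2 ?_
    have : |y' - (x i, x j).2| = y' - x j := abs_of_pos (by linarith)
    exact le_trans (min_le_right _ _) (le_of_eq this)
  -- cost of agent j at x j is at most y' - x j
  have hj2 : min |x j - a| |x j - b| ≤ y' - x j := by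
    have hw3 : F (Function.update X' j y') = (x i, y') := by
      refine lemZ F ρ hord happ hij hik hjk _ _ _ (by linarith) ?_ ?_ ?_
      · rw [Function.update_of_ne hij _ X', hX'i]
      · exact Function.update_self _ _ X'
      · rw [Function.update_of_ne (Ne.symm hjk) _ X', hX'k]
    have hsp3 := hsp X' j y'
    rw [hX'j, hw3] at hsp3
    refine le_trans hsp3 ?_
    have : |x j - (x i, y').2| = y' - x j := by
      rw [abs_sub_comm]; exact abs_of_pos (by linarith)
    exact le_trans (min_le_right _ _) (le_of_eq this)
  -- approximation bound on X'
  have htot : fcost (x i) (F X') + fcost (x j) (F X') + fcost y' (F X') ≤ ρ * (y' - x j) := by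
    have hopt : optCost X' ≤ y' - x j := by
      refine le_trans (optCost_le X' (x i, x j)) ?_
      rw [scost_eq3 hij hik hjk, hX'i, hX'j, hX'k]
      have e1 : fcost (x i) (x i, x j) ≤ 0 := by
        refine le_trans (min_le_left _ _) ?_
        show |x i - x i| ≤ 0
        rw [sub_self, abs_zero]
      have e2 : fcost (x j) (x i, x j) ≤ 0 := by
        refine le_trans (min_le_right _ _) ?_
        show |x j - x j| ≤ 0
        rw [sub_self, abs_zero]
      have e3 : fcost y' (x i, x j) ≤ y' - x j := by
        refine le_trans (min_le_right _ _) ?_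
        show |y' - x j| ≤ y' - x j
        rw [abs_of_pos (by linarith)]
      linarith
    have happ' := happ X'
    rw [scost_eq3 hij hik hjk, hX'i, hX'j, hX'k] at happ'
    refine le_trans happ' ?_
    exact mul_le_mul_of_nonneg_left hopt (by linarith)
  -- case analysis on b
  rcases lt_trichotomy b (x j) with hblt | hbeq | hbgt
  · -- b < x j : contradicts hk2
    exfalso
    have ha' : y' - a ≤ |y' - a| := le_abs_self _
    have hb' : y' - b ≤ |y' - b| := le_abs_self _
    have : y' - x j < min |y' - a| |y' - b| := by
      refine lt_min ?_ ?_ <;> linarith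
    linarith
  · exact hbeq
  · -- b > x j
    exfalso
    -- from the hole: b ≥ 2y - x j
    have hbbig : 2 * (y - x j) ≤ b - x j := by
      have := le_trans hhole (min_le_right |y - a| |y - b|)
      rcases abs_cases (y - b) with ⟨he, _⟩ | ⟨he, _⟩ <;> rw [he] at this <;> linarith
    -- |x j - a| ≤ y' - x j
    have haj : |x j - a| ≤ y' - x j := by
      rcases min_le_iff.mp hj2 with h | h
      · exact h
      · exfalso
        have : b - x j ≤ |x j - b| := by
          rw [abs_sub_comm]; exact le_abs_self _
        linarith
    have haj1 : x j - a ≤ y' - x j := le_trans (le_abs_self _) haj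
    have haj2 : a - x j ≤ y' - x j := by
      have : a - x j ≤ |x j - a| := by rw [abs_sub_comm]; exact le_abs_self _
      linarith
    -- a ≤ x j
    have halexj : a ≤ x j := by
      have := le_trans hhole (min_le_left |y - a| |y - b|)
      rcases abs_cases (y - a) with ⟨he, _⟩ | ⟨he, _⟩ <;> rw [he] at this <;> linarith
    -- lower bounds on the three cost terms
    have hti : a - x i ≤ fcost (x i) (F X') := by
      refine le_min ?_ ?_
      · have : -(x i - a) ≤ |x i - a| := neg_le_abs _
        linarith
      · have : -(x i - b) ≤ |x i - b| := neg_le_abs _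
        linarith
    have htj : x j - a ≤ fcost (x j) (F X') := by
      refine le_min (le_abs_self _) ?_
      have : -(x j - b) ≤ |x j - b| := neg_le_abs _
      linarith
    have htk : (0:ℝ) ≤ fcost y' (F X') := fcost_nonneg _ _
    linarith

/-- Proposition `c_pulls_b`: if `x` is `(i|j,k)`-well-separated and the
rightmost facility is at `x_j`, then for every `(i|j,k)`-well-separated
instance obtained by moving only agent `k`, the rightmost facility stays
at `x_j`. -/
theorem c_pulls_b (F : (Fin 3 → ℝ) → ℝ × ℝ) (ρ : ℝ) (hρ : 1 ≤ ρ)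
    (hord : Ordered F) (hsp : Strategyproof F) (happ : ApproxRatio F ρ)
    (x : Fin 3 → ℝ) (i j k : Fin 3)
    (hij : i ≠ j) (hik : i ≠ k) (hjk : j ≠ k)
    (hws : WellSep ρ x i j k) (hF : (F x).2 = x j)
    (x'k : ℝ) (hws' : WellSep ρ (Function.update x k x'k) i j k) :
    (F (Function.update x k x'k)).2 = x j := by
  obtain ⟨hxij, hxjk, hxsep⟩ := hws
  have hδ0 : 0 < x k - x j := by linarith
  have hρ0 : (0:ℝ) < ρ := by linarith
  have hwsx : WellSep ρ (Function.update x k (x k)) i j k := by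
    rw [Function.update_eq_self]; exact ⟨hxij, hxjk, hxsep⟩
  have hFx : (F (Function.update x k (x k))).2 = x j := by
    rw [Function.update_eq_self]; exact hF
  have key : ∀ n : ℕ, ∀ t : ℝ, WellSep ρ (Function.update x k t) i j k →
      t - x j ≤ (3/2)^n * (x k - x j) → (F (Function.update x k t)).2 = x j := by
    intro n
    induction n with
    | zero =>
      intro t hwt hle
      refine step_lemma F ρ hρ hord hsp happ x i j k hij hik hjk (x k) t hwsx hwt hFx ?_
      simp only [pow_zero, one_mul] at hle
      linarith
    | succ n ih =>
      intro t hwt hle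
      by_cases hcase : t - x j ≤ (3/2)^n * (x k - x j)
      · exact ih t hwt hcase
      · push_neg at hcase
        set s := x j + (3/2)^n * (x k - x j) with hs
        clear_value s
        have hpow1 : (1:ℝ) ≤ (3/2)^n := one_le_pow₀ (by norm_num)
        have hspos : 0 < s - x j := by
          have : (0:ℝ) < (3/2)^n * (x k - x j) := by positivity
          simp only [hs]; linarith
        obtain ⟨hwt1, hwt2, hwt3⟩ := hwt
        rw [Function.update_of_ne hik _ x, Function.update_of_ne hjk _ x] at hwt1
        rw [Function.update_of_ne hjk _ x, Function.update_self] at hwt2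
        rw [Function.update_of_ne hik _ x, Function.update_of_ne hjk _ x,
          Function.update_self] at hwt3
        have hws_s : WellSep ρ (Function.update x k s) i j k := by
          refine ⟨?_, ?_, ?_⟩
          · rw [Function.update_of_ne hik _ x, Function.update_of_ne hjk _ x]; exact hxij
          · rw [Function.update_of_ne hjk _ x, Function.update_self]; linarith
          · rw [Function.update_of_ne hik _ x, Function.update_of_ne hjk _ x,
              Function.update_self]
            have hst : s - x j < t - x j := by simp only [hs]; linarith
            nlinarith
        have hFs := ih s hws_s (by simp only [hs]; linarith)
        refine step_lemma F ρ hρ hord hsp happ x i j k hij hik hjk s t hws_s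
          ⟨?_, ?_, ?_⟩ hFs ?_
        · rw [Function.update_of_ne hik _ x, Function.update_of_ne hjk _ x]; exact hwt1
        · rw [Function.update_of_ne hjk _ x, Function.update_self]; exact hwt2
        · rw [Function.update_of_ne hik _ x, Function.update_of_ne hjk _ x,
            Function.update_self]; exact hwt3
        · rw [pow_succ] at hle
          have hseq : s - x j = (3/2)^n * (x k - x j) := by simp only [hs]; ring
          have h9 : (3/2:ℝ)^n * (3/2) * (x k - x j) = (3/2) * (s - x j) := by
            rw [hseq]; ring
          rw [h9] at hle
          linarith
  obtain ⟨n, hn⟩ := pow_unbounded_of_one_lt ((x'k - x j)/(x k - x j)) (by norm_num : (1:ℝ) < 3/2)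
  have hle : x'k - x j ≤ (3/2)^n * (x k - x j) := by
    rw [div_lt_iff₀ hδ0] at hn
    linarith
  exact key n x'k hws' hle
end
end

section
/- Let F be a strategyproof 2-facility mechanism on the line with approximation ratio at most ρ. If x is an (i|j,k)-well-separated instance with F_2(x) = x_j, then for every (i|j,k)-well-separated instance x' = (x_i, x'_j, x'_k) with x_j ≤ x'_j, it holds that F_2(x') = x'_j. -/
noncomputable section

namespace RightCoverAux

lemma fcost_def (a : ℝ) (yy : ℝ × ℝ) : fcost a yy = min |a - yy.1| |a - yy.2| := rfl

lemma fcost_nonneg (a : ℝ) (yy : ℝ × ℝ) : 0 ≤ fcost a yy :=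
  le_min (abs_nonneg _) (abs_nonneg _)

lemma fcost_lip (t s : ℝ) (yy : ℝ × ℝ) : fcost t yy ≤ fcost s yy + |t - s| := by
  unfold fcost
  rcases le_total |s - yy.1| |s - yy.2| with h | h
  · rw [min_eq_left h]
    calc min |t - yy.1| |t - yy.2| ≤ |t - yy.1| := min_le_left _ _
      _ ≤ |t - s| + |s - yy.1| := abs_sub_le t s yy.1
      _ = |s - yy.1| + |t - s| := by ring
  · rw [min_eq_right h]
    calc min |t - yy.1| |t - yy.2| ≤ |t - yy.2| := min_le_right _ _
      _ ≤ |t - s| + |s - yy.2| := abs_sub_le t s yy.2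
      _ = |s - yy.2| + |t - s| := by ring

lemma scost_nonneg {n : ℕ} (x : Fin n → ℝ) (yy : ℝ × ℝ) : 0 ≤ scost x yy :=
  Finset.sum_nonneg fun _ _ => fcost_nonneg _ _

lemma optCost_le {n : ℕ} (x : Fin n → ℝ) (yy : ℝ × ℝ) : optCost x ≤ scost x yy :=
  ciInf_le ⟨0, by rintro r ⟨zz, rfl⟩; exact scost_nonneg x zz⟩ yy

lemma optCost_nonneg {n : ℕ} (x : Fin n → ℝ) : 0 ≤ optCost x :=
  le_ciInf fun yy => scost_nonneg x yy

lemma univ_eq {i j k : Fin 3} (hij : i ≠ j) (hik : i ≠ k) (hjk : j ≠ k) :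
    (Finset.univ : Finset (Fin 3)) = {i, j, k} := by
  symm
  apply Finset.eq_univ_of_card
  rw [Finset.card_insert_of_notMem (by simp [hij, hik]),
      Finset.card_insert_of_notMem (by simp [hjk]), Finset.card_singleton]
  rfl

lemma sum_three {i j k : Fin 3} (hij : i ≠ j) (hik : i ≠ k) (hjk : j ≠ k) (f : Fin 3 → ℝ) :
    ∑ t, f t = f i + f j + f k := by
  rw [univ_eq hij hik hjk,
      Finset.sum_insert (by simp [hij, hik]),
      Finset.sum_insert (by simp [hjk]), Finset.sum_singleton]
  ring

/-- The instance with agent `i` kept at `x i`, agent `j` at `y`, agent `k` at `z`. -/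
def Ins (x : Fin 3 → ℝ) (j k : Fin 3) (y z : ℝ) : Fin 3 → ℝ :=
  Function.update (Function.update x j y) k z

variable {x : Fin 3 → ℝ} {i j k : Fin 3}

lemma Ins_i (hij : i ≠ j) (hik : i ≠ k) (y z : ℝ) : Ins x j k y z i = x i := by
  unfold Ins
  rw [Function.update_of_ne hik, Function.update_of_ne hij]

lemma Ins_j (hjk : j ≠ k) (y z : ℝ) : Ins x j k y z j = y := by
  unfold Ins
  rw [Function.update_of_ne hjk, Function.update_self]

lemma Ins_k (y z : ℝ) : Ins x j k y z k = z := by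
  unfold Ins
  rw [Function.update_self]

lemma upd_j (hjk : j ≠ k) (y y' z : ℝ) :
    Function.update (Ins x j k y z) j y' = Ins x j k y' z := by
  unfold Ins
  rw [Function.update_comm hjk.symm, Function.update_idem]

lemma upd_k (y z z' : ℝ) :
    Function.update (Ins x j k y z) k z' = Ins x j k y z' := by
  unfold Ins
  rw [Function.update_idem]

variable {F : (Fin 3 → ℝ) → ℝ × ℝ} {ρ : ℝ}

lemma sp_j (hsp : Strategyproof F) (hjk : j ≠ k) (y z y' : ℝ) :
    fcost y (F (Ins x j k y z)) ≤ fcost y (F (Ins x j k y' z)) := by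
  have h := hsp (Ins x j k y z) j y'
  rwa [Ins_j hjk, upd_j hjk] at h

lemma sp_k (hsp : Strategyproof F) (y z z' : ℝ) :
    fcost z (F (Ins x j k y z)) ≤ fcost z (F (Ins x j k y z')) := by
  have h := hsp (Ins x j k y z) k z'
  rwa [Ins_k, upd_k] at h

lemma fcost_pair_left (u v : ℝ) : fcost u (u, v) = 0 := by
  unfold fcost
  rw [show (u, v).1 = u from rfl, sub_self, abs_zero, min_eq_left (abs_nonneg _)]

lemma fcost_pair_right (u v : ℝ) : fcost v (u, v) = 0 := by
  unfold fcost
  rw [show (u, v).2 = v from rfl, sub_self, abs_zero, min_eq_right (abs_nonneg _)]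

lemma exact_of_zero (hρ : 1 ≤ ρ) (happ : ApproxRatio F ρ) (w : Fin 3 → ℝ)
    (u v : ℝ) (h0 : scost w (u, v) = 0) (t : Fin 3) : fcost (w t) (F w) = 0 := by
  have hopt0 : optCost w = 0 :=
    le_antisymm (h0 ▸ optCost_le w (u, v)) (optCost_nonneg w)
  have hs : scost w (F w) ≤ 0 := by
    have h := happ w; rw [hopt0, mul_zero] at h; exact h
  have hs0 : scost w (F w) = 0 := le_antisymm hs (scost_nonneg _ _)
  unfold scost at hs0
  exact (Finset.sum_eq_zero_iff_of_nonneg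
    (fun t _ => fcost_nonneg (w t) (F w))).mp hs0 t (Finset.mem_univ t)

lemma coincident (hρ : 1 ≤ ρ) (happ : ApproxRatio F ρ)
    (hij : i ≠ j) (hik : i ≠ k) (hjk : j ≠ k) (v : ℝ) :
    fcost v (F (Ins x j k v v)) = 0 := by
  have h0 : scost (Ins x j k v v) (x i, v) = 0 := by
    unfold scost
    rw [sum_three hij hik hjk, Ins_i hij hik, Ins_j hjk, Ins_k,
        fcost_pair_left, fcost_pair_right]
    ring
  have h := exact_of_zero hρ happ _ _ _ h0 k
  rwa [Ins_k] at h

/-- Structure of a well-separated instance: the right facility lies in `[y, z]`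
and is the one nearest to the middle agent. -/
lemma struct (hρ : 1 ≤ ρ) (hord : Ordered F) (hsp : Strategyproof F)
    (happ : ApproxRatio F ρ) (hij : i ≠ j) (hik : i ≠ k) (hjk : j ≠ k)
    {y z : ℝ} (hay : x i < y) (hyz : y < z) (hw : ρ * (z - y) < y - x i) :
    y ≤ (F (Ins x j k y z)).2 ∧ (F (Ins x j k y z)).2 ≤ z ∧
      fcost y (F (Ins x j k y z)) = (F (Ins x j k y z)).2 - y := by
  have hρ0 : (0:ℝ) ≤ ρ := le_trans zero_le_one hρ
  have hpq : (F (Ins x j k y z)).1 ≤ (F (Ins x j k y z)).2 := hord _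
  -- (1) y ≤ F₂
  have h1 : y ≤ (F (Ins x j k y z)).2 := by
    have hc : fcost y (F (Ins x j k y y)) = 0 := coincident hρ happ hij hik hjk y
    have hk1 := sp_k (x := x) (j := j) (k := k) hsp y z y
    have hk2 := fcost_lip z y (F (Ins x j k y y))
    rw [hc, zero_add, abs_of_pos (show (0:ℝ) < z - y by linarith)] at hk2
    have hk3 : fcost z (F (Ins x j k y z)) ≤ z - y := le_trans hk1 hk2
    rw [fcost_def] at hk3
    rcases min_le_iff.mp hk3 with h | h
    · have h' : z - (F (Ins x j k y z)).1 ≤ |z - (F (Ins x j k y z)).1| := le_abs_self _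
      linarith
    · have h' : z - (F (Ins x j k y z)).2 ≤ |z - (F (Ins x j k y z)).2| := le_abs_self _
      linarith
  -- (2) total cost bound
  have htot : scost (Ins x j k y z) (F (Ins x j k y z)) ≤ ρ * (z - y) := by
    have hopt : optCost (Ins x j k y z) ≤ z - y := by
      refine le_trans (optCost_le _ (x i, y)) ?_
      unfold scost
      rw [sum_three hij hik hjk, Ins_i hij hik, Ins_j hjk, Ins_k,
          fcost_pair_left, fcost_pair_right]
      have h2 : fcost z (x i, y) ≤ z - y := by
        refine le_trans (min_le_right _ _) ?_
        rw [show (x i, y).2 = y from rfl, abs_of_pos (show (0:ℝ) < z - y by linarith)]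
      linarith
    calc scost (Ins x j k y z) (F (Ins x j k y z)) ≤ ρ * optCost (Ins x j k y z) := happ _
      _ ≤ ρ * (z - y) := mul_le_mul_of_nonneg_left hopt hρ0
  have hsum : fcost (x i) (F (Ins x j k y z)) + fcost y (F (Ins x j k y z))
      + fcost z (F (Ins x j k y z)) = scost (Ins x j k y z) (F (Ins x j k y z)) := by
    unfold scost
    rw [sum_three hij hik hjk, Ins_i hij hik, Ins_j hjk, Ins_k]
  have hfz : 0 ≤ fcost z (F (Ins x j k y z)) := fcost_nonneg _ _
  have hay2 : fcost (x i) (F (Ins x j k y z)) + fcost y (F (Ins x j k y z)) < y - x i := by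
    linarith
  -- (3) fcost y = F₂ − y
  have hqy : |y - (F (Ins x j k y z)).2| = (F (Ins x j k y z)).2 - y := by
    rw [abs_sub_comm]; exact abs_of_nonneg (by linarith)
  have hle' : fcost y (F (Ins x j k y z)) ≤ (F (Ins x j k y z)).2 - y := by
    rw [fcost_def, ← hqy]; exact min_le_right _ _
  have hge : ¬ fcost y (F (Ins x j k y z)) < (F (Ins x j k y z)).2 - y := by
    intro hlt
    have hlt' : min |y - (F (Ins x j k y z)).1| |y - (F (Ins x j k y z)).2|
        < |y - (F (Ins x j k y z)).2| := by
      rw [← fcost_def, hqy]; exact hlt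
    have hplt : |y - (F (Ins x j k y z)).1| < |y - (F (Ins x j k y z)).2| := by
      rcases min_lt_iff.mp hlt' with h | h
      · exact h
      · exact absurd h (lt_irrefl _)
    have hfy : fcost y (F (Ins x j k y z)) = |y - (F (Ins x j k y z)).1| := by
      rw [fcost_def]; exact min_eq_left hplt.le
    rcases le_total |x i - (F (Ins x j k y z)).1| |x i - (F (Ins x j k y z)).2| with hc | hc
    · have hfa : fcost (x i) (F (Ins x j k y z)) = |x i - (F (Ins x j k y z)).1| := by
        rw [fcost_def]; exact min_eq_left hc
      have htri : |y - x i| ≤ |y - (F (Ins x j k y z)).1|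
          + |(F (Ins x j k y z)).1 - x i| := abs_sub_le _ _ _
      rw [abs_of_pos (show (0:ℝ) < y - x i by linarith),
          abs_sub_comm ((F (Ins x j k y z)).1) (x i)] at htri
      linarith
    · have hfa : fcost (x i) (F (Ins x j k y z)) = |x i - (F (Ins x j k y z)).2| := by
        rw [fcost_def]; exact min_eq_right hc
      have h5 : (F (Ins x j k y z)).2 - x i ≤ |x i - (F (Ins x j k y z)).2| := by
        rw [abs_sub_comm]; exact le_abs_self _
      have hfy0 : 0 ≤ fcost y (F (Ins x j k y z)) := fcost_nonneg _ _
      linarith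
  have h3 : fcost y (F (Ins x j k y z)) = (F (Ins x j k y z)).2 - y :=
    le_antisymm hle' (not_lt.mp hge)
  -- (4) F₂ ≤ z
  have h2 : (F (Ins x j k y z)).2 ≤ z := by
    have hc : fcost z (F (Ins x j k z z)) = 0 := coincident hρ happ hij hik hjk z
    have hspj := sp_j (x := x) hsp hjk y z z
    have hlp := fcost_lip y z (F (Ins x j k z z))
    rw [hc, zero_add, abs_sub_comm, abs_of_pos (show (0:ℝ) < z - y by linarith)] at hlp
    linarith [le_trans hspj hlp]
  exact ⟨h1, h2, h3⟩


/-- One contraction step for moving the middle agent: if the facility for the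
middle agent at `y` is not exactly at `y`, there is a point `y'` closer to the
anchor `ys` whose facility-gap is at least `3/2` times larger. -/
lemma pushj_step (hρ : 1 ≤ ρ) (hord : Ordered F) (hsp : Strategyproof F)
    (happ : ApproxRatio F ρ) (hij : i ≠ j) (hik : i ≠ k) (hjk : j ≠ k)
    {ys z : ℝ} (hay : x i < ys) (hyz : ys < z) (hw : ρ * (z - ys) < ys - x i)
    (hq0 : (F (Ins x j k ys z)).2 = ys)
    {y : ℝ} (h1 : ys < y) (h2 : y < z)
    (hpos : 0 < (F (Ins x j k y z)).2 - y) :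
    ∃ y', ys < y' ∧ y' < y ∧
      (3/2) * ((F (Ins x j k y z)).2 - y) ≤ (F (Ins x j k y' z)).2 - y' := by
  have hρ0 : (0:ℝ) ≤ ρ := le_trans zero_le_one hρ
  have hay' : x i < y := lt_trans hay h1
  have hwy : ρ * (z - y) < y - x i := by
    have h := mul_le_mul_of_nonneg_left (show z - y ≤ z - ys by linarith) hρ0
    linarith
  obtain ⟨hg1, hg2, hg3⟩ := struct hρ hord hsp happ hij hik hjk hay' h2 hwy
  have hc0 : fcost ys (F (Ins x j k ys z)) = 0 := by
    have h := (struct hρ hord hsp happ hij hik hjk hay hyz hw).2.2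
    rw [hq0] at h; simpa using h
  have hub : (F (Ins x j k y z)).2 - y ≤ y - ys := by
    have ha := sp_j (x := x) hsp hjk y z ys
    have hb := fcost_lip y ys (F (Ins x j k ys z))
    rw [hc0, zero_add, abs_of_pos (show (0:ℝ) < y - ys by linarith)] at hb
    linarith [hg3]
  obtain ⟨y', hy'⟩ : ∃ y', y' = y - ((F (Ins x j k y z)).2 - y)/2 := ⟨_, rfl⟩
  have hy'1 : ys < y' := by linarith
  have hy'lt : y' < y := by linarith
  have hy'z : y' < z := by linarith
  have hay'' : x i < y' := lt_trans hay hy'1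
  have hwy' : ρ * (z - y') < y' - x i := by
    have h := mul_le_mul_of_nonneg_left (show z - y' ≤ z - ys by linarith) hρ0
    linarith
  obtain ⟨hh1, hh2, hh3⟩ := struct hρ hord hsp happ hij hik hjk hay'' hy'z hwy'
  have hsp2 := sp_j (x := x) hsp hjk y z y'
  have hup : (F (Ins x j k y z)).2 - y ≤ |y - (F (Ins x j k y' z)).2| := by
    have h5 : fcost y (F (Ins x j k y' z)) ≤ |y - (F (Ins x j k y' z)).2| := by
      rw [fcost_def]; exact min_le_right _ _
    linarith [hg3, hsp2]
  have hq'big : y + ((F (Ins x j k y z)).2 - y) ≤ (F (Ins x j k y' z)).2 := by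
    rcases abs_cases (y - (F (Ins x j k y' z)).2) with ⟨h7, _⟩ | ⟨h7, _⟩
    · exfalso
      rw [h7] at hup
      linarith [hh1]
    · rw [h7] at hup; linarith
  exact ⟨y', hy'1, hy'lt, by linarith [hq'big, hh1]⟩

/-- Pushing the middle agent to the right within a fixed well-separated instance. -/
lemma pushj (hρ : 1 ≤ ρ) (hord : Ordered F) (hsp : Strategyproof F)
    (happ : ApproxRatio F ρ) (hij : i ≠ j) (hik : i ≠ k) (hjk : j ≠ k)
    {ys z y₀ : ℝ} (hay : x i < ys) (hyz : ys < z) (hw : ρ * (z - ys) < ys - x i)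
    (hq0 : (F (Ins x j k ys z)).2 = ys) (h01 : ys < y₀) (h02 : y₀ < z) :
    (F (Ins x j k y₀ z)).2 = y₀ := by
  have hρ0 : (0:ℝ) ≤ ρ := le_trans zero_le_one hρ
  have hay0 : x i < y₀ := lt_trans hay h01
  have hw0 : ρ * (z - y₀) < y₀ - x i := by
    have h := mul_le_mul_of_nonneg_left (show z - y₀ ≤ z - ys by linarith) hρ0
    linarith
  obtain ⟨hg1, _, _⟩ := struct hρ hord hsp happ hij hik hjk hay0 h02 hw0
  rcases eq_or_lt_of_le hg1 with h | hpos0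
  · exact h.symm
  exfalso
  have hcpos : 0 < (F (Ins x j k y₀ z)).2 - y₀ := by linarith
  have hrec : ∀ n : ℕ, ∃ y, ys < y ∧ y ≤ y₀ ∧
      (3/2)^n * ((F (Ins x j k y₀ z)).2 - y₀) ≤ (F (Ins x j k y z)).2 - y := by
    intro n
    induction n with
    | zero => exact ⟨y₀, h01, le_refl _, by simp⟩
    | succ n ih =>
      obtain ⟨y, hy1, hy2, hy3⟩ := ih
      have hyz' : y < z := lt_of_le_of_lt hy2 h02
      have hcy : 0 < (F (Ins x j k y z)).2 - y := by
        have hp : (0:ℝ) < (3/2)^n * ((F (Ins x j k y₀ z)).2 - y₀) := by positivity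
        linarith
      obtain ⟨y', hy'1, hy'2, hy'3⟩ := pushj_step hρ hord hsp happ hij hik hjk
        hay hyz hw hq0 hy1 hyz' hcy
      refine ⟨y', hy'1, by linarith, ?_⟩
      calc (3/2:ℝ)^(n+1) * ((F (Ins x j k y₀ z)).2 - y₀)
          = (3/2) * ((3/2)^n * ((F (Ins x j k y₀ z)).2 - y₀)) := by ring
        _ ≤ (3/2) * ((F (Ins x j k y z)).2 - y) := by nlinarith [hy3]
        _ ≤ (F (Ins x j k y' z)).2 - y' := hy'3
  obtain ⟨n, hn⟩ := pow_unbounded_of_one_lt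
    ((y₀ - ys)/((F (Ins x j k y₀ z)).2 - y₀)) (by norm_num : (1:ℝ) < 3/2)
  obtain ⟨y, hy1, hy2, hy3⟩ := hrec n
  have hyz' : y < z := lt_of_le_of_lt hy2 h02
  have hay' : x i < y := lt_trans hay hy1
  have hwy : ρ * (z - y) < y - x i := by
    have h := mul_le_mul_of_nonneg_left (show z - y ≤ z - ys by linarith) hρ0
    linarith
  obtain ⟨_, _, hg3⟩ := struct hρ hord hsp happ hij hik hjk hay' hyz' hwy
  have hc0 : fcost ys (F (Ins x j k ys z)) = 0 := by
    have h := (struct hρ hord hsp happ hij hik hjk hay hyz hw).2.2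
    rw [hq0] at h; simpa using h
  have hub : (F (Ins x j k y z)).2 - y ≤ y - ys := by
    have ha := sp_j (x := x) hsp hjk y z ys
    have hb := fcost_lip y ys (F (Ins x j k ys z))
    rw [hc0, zero_add, abs_of_pos (show (0:ℝ) < y - ys by linarith)] at hb
    linarith [hg3]
  rw [div_lt_iff₀ hcpos] at hn
  linarith

/-- Moving the rightmost agent anywhere (within well-separatedness),
keeping the facility at the middle agent. -/
lemma pushk (hρ : 1 ≤ ρ) (hord : Ordered F) (hsp : Strategyproof F)
    (happ : ApproxRatio F ρ) (hij : i ≠ j) (hik : i ≠ k) (hjk : j ≠ k)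
    {y z₀ : ℝ} (hay : x i < y) (hz₀ : y < z₀) (hw₀ : ρ * (z₀ - y) < y - x i)
    (hq₀ : (F (Ins x j k y z₀)).2 = y) :
    ∀ z', y < z' → ρ * (z' - y) < y - x i → (F (Ins x j k y z')).2 = y := by
  have hρ0 : (0:ℝ) ≤ ρ := le_trans zero_le_one hρ
  have hρpos : (0:ℝ) < ρ := lt_of_lt_of_le zero_lt_one hρ
  set S : Set ℝ := {w | y < w ∧ ρ * (w - y) < y - x i ∧ (F (Ins x j k y w)).2 = y} with hS
  have hmemS : ∀ w, w ∈ S ↔ (y < w ∧ ρ * (w - y) < y - x i ∧ (F (Ins x j k y w)).2 = y) :=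
    fun w => Iff.rfl
  have hbdd : BddAbove S := by
    refine ⟨y + (y - x i)/ρ, fun w hw => ?_⟩
    obtain ⟨h1, h2, _⟩ := (hmemS w).mp hw
    have h3 : w - y < (y - x i)/ρ := by rw [lt_div_iff₀ hρpos]; nlinarith
    linarith
  have hS₀ : z₀ ∈ S := (hmemS z₀).mpr ⟨hz₀, hw₀, hq₀⟩
  have hs0 : z₀ ≤ sSup S := le_csSup hbdd hS₀
  have hys : y < sSup S := lt_of_lt_of_le hz₀ hs0
  have hstep : ∀ z', y < z' → ρ * (z' - y) < y - x i → z' < 2 * sSup S - y →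
      (F (Ins x j k y z')).2 = y := by
    intro z' h1 h2 h3
    obtain ⟨hge, hle2, _⟩ := struct hρ hord hsp happ hij hik hjk hay h1 h2
    rcases eq_or_lt_of_le hge with h | hgt
    · exact h.symm
    exfalso
    have hub2 : ∀ w ∈ S, w ≤ ((F (Ins x j k y z')).2 + y)/2 := by
      intro w hw
      obtain ⟨hw1, hw2, hw3⟩ := (hmemS w).mp hw
      have hp : (F (Ins x j k y w)).1 ≤ y := by
        have h := hord (Ins x j k y w); rw [hw3] at h; exact h
      have hf : fcost w (F (Ins x j k y w)) = w - y := by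
        rw [fcost_def, hw3, abs_of_pos (show (0:ℝ) < w - y by linarith),
            abs_of_pos (show (0:ℝ) < w - (F (Ins x j k y w)).1 by linarith)]
        exact min_eq_right (by linarith)
      have hsp' := sp_k (x := x) (j := j) (k := k) hsp y w z'
      rw [hf] at hsp'
      have h5 : w - y ≤ |w - (F (Ins x j k y z')).2| := by
        refine le_trans hsp' ?_
        rw [fcost_def]; exact min_le_right _ _
      rcases abs_cases (w - (F (Ins x j k y z')).2) with ⟨h6, _⟩ | ⟨h6, _⟩
      · exfalso; rw [h6] at h5; linarith
      · rw [h6] at h5; linarith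
    have hsle : sSup S ≤ ((F (Ins x j k y z')).2 + y)/2 := csSup_le ⟨z₀, hS₀⟩ hub2
    linarith
  intro z' h1 h2
  by_cases h3 : z' < 2 * sSup S - y
  · exact hstep z' h1 h2 h3
  · exfalso
    push_neg at h3
    have hw1 : y < (3 * sSup S - y)/2 := by linarith
    have hw2 : (3 * sSup S - y)/2 < 2 * sSup S - y := by linarith
    have hw3 : (3 * sSup S - y)/2 ≤ z' := by linarith
    have hw4 : ρ * ((3 * sSup S - y)/2 - y) < y - x i := by
      have h := mul_le_mul_of_nonneg_left
        (show (3 * sSup S - y)/2 - y ≤ z' - y by linarith) hρ0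
      linarith
    have hmem : (3 * sSup S - y)/2 ∈ S :=
      (hmemS _).mpr ⟨hw1, hw4, hstep _ hw1 hw4 hw2⟩
    have := le_csSup hbdd hmem
    linarith

end RightCoverAux

open RightCoverAux in
/-- Proposition `right_cover` (K = 2): if `x` is `(i|j,k)`-well-separated with the
rightmost facility at `x_j`, then for every `(i|j,k)`-well-separated instance
obtained by replacing `x_j, x_k` with `x'_j, x'_k` where `x_j ≤ x'_j`, the
rightmost facility is at `x'_j`. -/
theorem right_cover (F : (Fin 3 → ℝ) → ℝ × ℝ) (ρ : ℝ) (hρ : 1 ≤ ρ)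
    (hord : Ordered F) (hsp : Strategyproof F) (happ : ApproxRatio F ρ)
    (x : Fin 3 → ℝ) (i j k : Fin 3)
    (hij : i ≠ j) (hik : i ≠ k) (hjk : j ≠ k)
    (hws : WellSep ρ x i j k) (hF : (F x).2 = x j)
    (x'j x'k : ℝ)
    (hws' : WellSep ρ (Function.update (Function.update x j x'j) k x'k) i j k)
    (hle : x j ≤ x'j) :
    (F (Function.update (Function.update x j x'j) k x'k)).2 = x'j := by
  have hρ0 : (0:ℝ) ≤ ρ := le_trans zero_le_one hρ
  have hρpos : (0:ℝ) < ρ := lt_of_lt_of_le zero_lt_one hρ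
  obtain ⟨hab, hbc, hwx⟩ := hws
  have hxeq : Ins x j k (x j) (x k) = x := by
    funext t
    unfold Ins
    rcases eq_or_ne t k with rfl | htk
    · rw [Function.update_self]
    · rw [Function.update_of_ne htk]
      rcases eq_or_ne t j with rfl | htj
      · rw [Function.update_self]
      · rw [Function.update_of_ne htj]
  have hF2 : (F (Ins x j k (x j) (x k))).2 = x j := by rw [hxeq]; exact hF
  have hws'' : WellSep ρ (Ins x j k x'j x'k) i j k := hws'
  have h1 := hws''.1
  rw [Ins_i hij hik, Ins_j hjk] at h1
  have h2 := hws''.2.1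
  rw [Ins_j hjk, Ins_k] at h2
  have h3 := hws''.2.2
  rw [Ins_i hij hik, Ins_j hjk, Ins_k] at h3
  have hGb : ∀ z', x j < z' → ρ * (z' - x j) < x j - x i → (F (Ins x j k (x j) z')).2 = x j :=
    pushk hρ hord hsp happ hij hik hjk hab hbc hwx hF2
  have hstep : ∀ y, x i < y →
      (∀ z', y < z' → ρ * (z' - y) < y - x i → (F (Ins x j k y z')).2 = y) →
      ∀ y', y < y' → y' ≤ y + (y - x i)/(2*ρ) →
      ∀ z', y' < z' → ρ * (z' - y') < y' - x i → (F (Ins x j k y' z')).2 = y' := by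
    intro y hay hGy y' hyy' hy'le
    have hay' : x i < y' := lt_trans hay hyy'
    have hu : 0 < y - x i := by linarith
    have hz1 : y < y + 3*(y - x i)/(4*ρ) := by
      have h := div_pos (show (0:ℝ) < 3*(y - x i) by linarith)
        (show (0:ℝ) < 4*ρ by linarith)
      linarith
    have hzρ : ρ * ((y + 3*(y - x i)/(4*ρ)) - y) < y - x i := by
      have he : ρ * ((y + 3*(y - x i)/(4*ρ)) - y) = 3*(y - x i)/4 := by
        field_simp
        ring
      rw [he]; linarith
    have hy'z : y' < y + 3*(y - x i)/(4*ρ) := by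
      have hcmp : (y - x i)/(2*ρ) < 3*(y - x i)/(4*ρ) := by
        rw [div_lt_div_iff₀ (show (0:ℝ) < 2*ρ by linarith) (show (0:ℝ) < 4*ρ by linarith)]
        nlinarith
      linarith
    have hqz : (F (Ins x j k y (y + 3*(y - x i)/(4*ρ)))).2 = y := hGy _ hz1 hzρ
    have hq' : (F (Ins x j k y' (y + 3*(y - x i)/(4*ρ)))).2 = y' :=
      pushj hρ hord hsp happ hij hik hjk hay hz1 hzρ hqz hyy' hy'z
    refine pushk hρ hord hsp happ hij hik hjk hay' hy'z ?_ hq'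
    have h := mul_le_mul_of_nonneg_left
      (show (y + 3*(y - x i)/(4*ρ)) - y' ≤ (y + 3*(y - x i)/(4*ρ)) - y by linarith) hρ0
    linarith
  have hdpos : 0 < (x j - x i)/(2*ρ) :=
    div_pos (by linarith) (by linarith)
  have hiter : ∀ n : ℕ, ∀ y, x j ≤ y → y ≤ x j + n * ((x j - x i)/(2*ρ)) →
      ∀ z', y < z' → ρ * (z' - y) < y - x i → (F (Ins x j k y z')).2 = y := by
    intro n
    induction n with
    | zero =>
      intro y hy1 hy2
      have hyb : y = x j := le_antisymm (by simpa using hy2) hy1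
      rw [hyb]; exact hGb
    | succ n ih =>
      intro y hy1 hy2
      rcases le_or_gt y (x j + n * ((x j - x i)/(2*ρ))) with h4 | h4
      · exact ih y hy1 h4
      · have hnd : (0:ℝ) ≤ n * ((x j - x i)/(2*ρ)) :=
          mul_nonneg (Nat.cast_nonneg n) hdpos.le
        have hyn : x j ≤ x j + n * ((x j - x i)/(2*ρ)) := by linarith
        have hGyn := ih _ hyn (le_refl _)
        have hayn : x i < x j + n * ((x j - x i)/(2*ρ)) := lt_of_lt_of_le hab hyn
        refine hstep _ hayn hGyn y h4 ?_
        have hdle : (x j - x i)/(2*ρ) ≤ (x j + n * ((x j - x i)/(2*ρ)) - x i)/(2*ρ) := by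
          rw [div_le_div_iff₀ (show (0:ℝ) < 2*ρ by linarith) (show (0:ℝ) < 2*ρ by linarith)]
          nlinarith
        have hcast : y ≤ x j + n * ((x j - x i)/(2*ρ)) + (x j - x i)/(2*ρ) := by
          push_cast at hy2
          linarith
        linarith
  obtain ⟨n, hn⟩ := exists_nat_ge ((x'j - x j)/((x j - x i)/(2*ρ)))
  rw [div_le_iff₀ hdpos] at hn
  have hY : x'j ≤ x j + n * ((x j - x i)/(2*ρ)) := by linarith
  show (F (Ins x j k x'j x'k)).2 = x'j
  exact hiter n x'j hle hY x'k h2 h3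
end
end

section
/- Let F be a strategyproof 2-facility mechanism on the line with n ≥ 5 agents that satisfies the two-extremes/dictator dichotomy: either F always places facilities at (min x, max x), or there exists a unique agent j such that F always places a facility at x_j. Then the approximation ratio of F for the social cost is at least n − 2. -/
noncomputable section

def myEps (n : ℕ) : ℝ := 1 / (2 * n)

def xinst (n : ℕ) (j k : Fin n) : Fin n → ℝ :=
  fun i => if i = j then 0 else if i = k then 1 else myEps n

lemma scost_xinst (n : ℕ) (hn : 2 ≤ n) (j k : Fin n) (hjk : j ≠ k) (y : ℝ × ℝ) :
    scost (xinst n j k) y = fcost 0 y + fcost 1 y + ((n : ℝ) - 2) * fcost (myEps n) y := by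
  have hk : k ∈ Finset.univ.erase j := Finset.mem_erase.mpr ⟨hjk.symm, Finset.mem_univ k⟩
  rw [scost, ← Finset.sum_erase_add _ _ (Finset.mem_univ j),
    ← Finset.sum_erase_add _ _ hk]
  have h1 : ∑ i ∈ (Finset.univ.erase j).erase k, fcost (xinst n j k i) y
      = ∑ _i ∈ (Finset.univ.erase j).erase k, fcost (myEps n) y := by
    apply Finset.sum_congr rfl
    intro i hi
    simp only [Finset.mem_erase] at hi
    simp [xinst, hi.1, hi.2.1]
  rw [h1, Finset.sum_const, Finset.card_erase_of_mem hk,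
    Finset.card_erase_of_mem (Finset.mem_univ j), Finset.card_univ, Fintype.card_fin]
  have hx1 : xinst n j k k = 1 := by simp [xinst, hjk.symm]
  have hx0 : xinst n j k j = 0 := by simp [xinst]
  have hc : ((n - 1 - 1 : ℕ) : ℝ) = (n : ℝ) - 2 := by
    rw [Nat.sub_sub]
    push_cast [Nat.cast_sub hn]
    ring
  rw [hx1, hx0, nsmul_eq_mul, hc]
  ring

lemma key (n : ℕ) (hn : 5 ≤ n) (F : (Fin n → ℝ) → ℝ × ℝ) (j k : Fin n) (hjk : j ≠ k)
    (hF0 : (F (xinst n j k)).1 = 0 ∨ (F (xinst n j k)).2 = 0)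
    (ρ : ℝ) (happ : ApproxRatio F ρ) : (n : ℝ) - 2 ≤ ρ := by
  set x := xinst n j k with hx
  set E := myEps n with hEdef
  have hn2 : 2 ≤ n := by omega
  have hn5 : (5 : ℝ) ≤ (n : ℝ) := by exact_mod_cast hn
  have hE : 0 < E := by
    rw [hEdef, myEps]
    positivity
  have hnE : (n : ℝ) * E = 1 / 2 := by
    rw [hEdef, myEps]
    field_simp
  have hE1 : 2 * E ≤ 1 := by nlinarith
  -- lower bound on scost x (F x)
  obtain ⟨w, hfc⟩ : ∃ w, ∀ a : ℝ, fcost a (F x) = min |a| |a - w| := by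
    rcases hF0 with h | h
    · exact ⟨(F x).2, fun a => by rw [fcost, h, sub_zero]⟩
    · exact ⟨(F x).1, fun a => by rw [fcost, h, sub_zero, min_comm]⟩
  have hsum := scost_xinst n hn2 j k hjk (F x)
  rw [hfc 0, hfc 1, hfc E, abs_one, abs_of_nonneg hE.le] at hsum
  have h00 : min |(0:ℝ)| |0 - w| = 0 := by
    simp [abs_nonneg]
  have hlb : ((n : ℝ) - 2) * E ≤ scost x (F x) := by
    rw [hsum, h00]
    rcases le_or_gt E |E - w| with hcase | hcase
    · rw [min_eq_left hcase]
      have : (0:ℝ) ≤ min 1 |1 - w| := le_min zero_le_one (abs_nonneg _)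
      nlinarith
    · have hw : w < 2 * E := by
        have := (abs_lt.mp hcase).1
        linarith
      have h1w : 1 - 2 * E ≤ min 1 |1 - w| := by
        apply le_min (by linarith)
        calc 1 - 2 * E ≤ 1 - w := by linarith
        _ ≤ |1 - w| := le_abs_self _
      have hmn : (0:ℝ) ≤ min E |E - w| := le_min hE.le (abs_nonneg _)
      nlinarith
  -- upper bound on optCost x
  have hub : optCost x ≤ E := by
    have hbdd : BddBelow (Set.range fun y => scost x y) := by
      refine ⟨0, ?_⟩
      rintro _ ⟨y, rfl⟩
      exact scost_nonneg x y
    have hle : optCost x ≤ scost x (E, 1) := ciInf_le hbdd (E, 1)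
    have hval : scost x (E, 1) = E := by
      rw [scost_xinst n hn2 j k hjk]
      have h1 : fcost 0 (E, 1) = E := by
        rw [fcost]
        simp only [zero_sub, abs_neg]
        rw [abs_of_nonneg hE.le, abs_of_nonneg (by norm_num : (0:ℝ) ≤ 1)]
        exact min_eq_left (by linarith)
      have h2 : fcost 1 (E, 1) = 0 := by
        rw [fcost]
        simp only [sub_self, abs_zero]
        exact min_eq_right (abs_nonneg _)
      have h3 : fcost E (E, 1) = 0 := by
        rw [fcost]
        simp only [sub_self, abs_zero]
        exact min_eq_left (abs_nonneg _)
      rw [h1, h2, h3]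
      ring
    rw [hval] at hle
    exact hle
  have hopt0 : 0 ≤ optCost x := le_ciInf fun y => scost_nonneg x y
  have hmain : ((n : ℝ) - 2) * E ≤ ρ * optCost x := hlb.trans (happ x)
  rcases le_or_gt 0 ρ with hρ | hρ
  · have : ρ * optCost x ≤ ρ * E := mul_le_mul_of_nonneg_left hub hρ
    have hfin : ((n : ℝ) - 2) * E ≤ ρ * E := by linarith
    exact le_of_mul_le_mul_right hfin hE
  · have : ρ * optCost x ≤ 0 := mul_nonpos_of_nonpos_of_nonneg hρ.le hopt0
    nlinarith

/-- Any strategyproof 2-facility mechanism with `n ≥ 5` agents satisfying the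
two-extremes/dictator dichotomy has approximation ratio at least `n - 2`. -/
theorem approx_ge_n_sub_two (n : ℕ) (hn : 5 ≤ n) (F : (Fin n → ℝ) → ℝ × ℝ)
    (hord : Ordered F) (hsp : Strategyproof F)
    (hdich : (∀ x : Fin n → ℝ, F x = (sInf (Set.range x), sSup (Set.range x))) ∨
      (∃! j : Fin n, ∀ x : Fin n → ℝ, (F x).1 = x j ∨ (F x).2 = x j))
    (ρ : ℝ) (happ : ApproxRatio F ρ) :
    (n : ℝ) - 2 ≤ ρ := by
  have h0 : (0 : ℕ) < n := by omega
  have h1 : (1 : ℕ) < n := by omega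
  have hE0 : (0:ℝ) ≤ myEps n := by
    rw [myEps]; positivity
  rcases hdich with hext | hdict
  · -- two extremes
    set j : Fin n := ⟨0, h0⟩
    set k : Fin n := ⟨1, h1⟩
    have hjk : j ≠ k := by simp [j, k, Fin.ext_iff]
    refine key n hn F j k hjk ?_ ρ happ
    left
    rw [hext (xinst n j k)]
    apply IsLeast.csInf_eq
    constructor
    · exact ⟨j, by simp [xinst]⟩
    · rintro a ⟨i, rfl⟩
      rw [xinst]
      split_ifs <;> simp [myEps]
  · obtain ⟨j, hj, -⟩ := hdict
    set k : Fin n := if j = ⟨0, h0⟩ then ⟨1, h1⟩ else ⟨0, h0⟩ with hkdef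
    have hjk : j ≠ k := by
      rw [hkdef]
      split_ifs with h
      · rw [h]; simp [Fin.ext_iff]
      · exact h
    refine key n hn F j k hjk ?_ ρ happ
    have := hj (xinst n j k)
    rwa [show xinst n j k j = 0 by simp [xinst]] at this
end
end

section
/- The Two-Extremes mechanism, which on input x = (x_1,...,x_n) outputs the pair (min x, max x), is group strategyproof: for any instance x, any coalition S of agents, and any joint misreport y_S, some agent in S does not strictly decrease her cost. -/
noncomputable section

/-- The Two-Extremes mechanism: place the facilities at the leftmost and the
rightmost reported location. -/
def TwoExtremes (n : ℕ) : (Fin n → ℝ) → ℝ × ℝ :=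
  fun x => (sInf (Set.range x), sSup (Set.range x))

/-- The Two-Extremes mechanism is group strategyproof: for any coalition `S`
and any joint misreport `y`, some agent of `S` does not strictly decrease
her cost. -/
theorem twoExtremes_group_strategyproof (n : ℕ) (x : Fin n → ℝ)
    (S : Finset (Fin n)) (hS : S.Nonempty) (y : Fin n → ℝ) :
    ∃ i ∈ S, fcost (x i) (TwoExtremes n x) ≤
      fcost (x i) (TwoExtremes n (fun t => if t ∈ S then y t else x t)) := by
  classical
  have hne : (Set.range x).Nonempty := Set.range_nonempty_iff_nonempty.mpr ⟨hS.choose⟩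
  have hfin : (Set.range x).Finite := Set.finite_range x
  set x' : Fin n → ℝ := fun t => if t ∈ S then y t else x t with hx'
  have hnonneg : ∀ (a : ℝ) (p : ℝ × ℝ), 0 ≤ fcost a p :=
    fun a p => le_min (abs_nonneg _) (abs_nonneg _)
  obtain ⟨imin, hmin⟩ := hne.csInf_mem hfin
  obtain ⟨imax, hmax⟩ := hne.csSup_mem hfin
  by_cases hminS : imin ∈ S
  · refine ⟨imin, hminS, le_trans ?_ (hnonneg _ _)⟩
    have : fcost (x imin) (TwoExtremes n x) ≤ |x imin - sInf (Set.range x)| :=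
      min_le_left _ _
    simpa [hmin] using this
  by_cases hmaxS : imax ∈ S
  · refine ⟨imax, hmaxS, le_trans ?_ (hnonneg _ _)⟩
    have : fcost (x imax) (TwoExtremes n x) ≤ |x imax - sSup (Set.range x)| :=
      min_le_right _ _
    simpa [hmax] using this
  · obtain ⟨i, hi⟩ := hS
    refine ⟨i, hi, ?_⟩
    have hne' : (Set.range x').Nonempty := Set.range_nonempty_iff_nonempty.mpr ⟨i⟩
    have hfin' : (Set.range x').Finite := Set.finite_range x'
    have hxmin' : x' imin = x imin := by simp [hx', hminS]
    have hxmax' : x' imax = x imax := by simp [hx', hmaxS]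
    have ha' : sInf (Set.range x') ≤ sInf (Set.range x) := by
      rw [← hmin, ← hxmin']
      exact csInf_le hfin'.bddBelow ⟨imin, rfl⟩
    have hb' : sSup (Set.range x) ≤ sSup (Set.range x') := by
      rw [← hmax, ← hxmax']
      exact le_csSup hfin'.bddAbove ⟨imax, rfl⟩
    have hax : sInf (Set.range x) ≤ x i := csInf_le hfin.bddBelow ⟨i, rfl⟩
    have hxb : x i ≤ sSup (Set.range x) := le_csSup hfin.bddAbove ⟨i, rfl⟩
    have h1 : |x i - sInf (Set.range x)| ≤ |x i - sInf (Set.range x')| := by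
      rw [abs_of_nonneg (by linarith)]
      calc x i - sInf (Set.range x) ≤ x i - sInf (Set.range x') := by linarith
        _ ≤ |x i - sInf (Set.range x')| := le_abs_self _
    have h2 : |x i - sSup (Set.range x)| ≤ |x i - sSup (Set.range x')| := by
      rw [abs_sub_comm, abs_of_nonneg (by linarith)]
      calc sSup (Set.range x) - x i ≤ sSup (Set.range x') - x i := by linarith
        _ ≤ |sSup (Set.range x') - x i| := le_abs_self _
        _ = |x i - sSup (Set.range x')| := abs_sub_comm _ _
    simpa [fcost, TwoExtremes] using min_le_min h1 h2
end
end
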